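/- Fix γ with 1/2 < γ < 1 and for ε ∈ (0,1) define Q_ε = {W = a_ε + ρ e^{i(π − t)} : |t| ≤ ε^γ, |ρ − a_ε| ≤ a_ε · sin(ε^γ)}. Then: (i) for every bounded set D ⊂ ℂ there exists ε₀ > 0 with D ⊆ Q_ε for all ε ∈ (0, ε₀); and (ii) there exist C > 0 and ε₁ > 0 such that for all ε ∈ (0, ε₁) and all W ∈ Q_ε, |Re W − Re H_ε(W)| ≤ C ε^{2γ−1} and |Im W − Im H_ε(W)| ≤ C ε^{2γ−1}. -/

import Mathlib

open Complex Set Metric Filter Topology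

/-- The region `Q_ε = {W = a_ε + ρ e^{i(π−t)} : |t| ≤ ε^γ, |ρ − a_ε| ≤ a_ε sin(ε^γ)}`
(Section 5), where `a_ε = 1/ε`. -/
def Qregion (γ ε : ℝ) : Set ℂ :=
  {W : ℂ | ∃ ρ t : ℝ, |t| ≤ ε ^ γ ∧ |ρ - 1 / ε| ≤ (1 / ε) * Real.sin (ε ^ γ) ∧
    W = ((1 / ε : ℝ) : ℂ) + (ρ : ℂ) * Complex.exp (((Real.pi - t : ℝ) : ℂ) * Complex.I)}


set_option maxHeartbeats 1000000

lemma aux_log_taylor {x : ℝ} (hx : |x| ≤ 1/2) : |Real.log (1+x) - x| ≤ 2 * x^2 := by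
  have h1 : |(-x)| < 1 := by rw [abs_neg]; linarith [abs_nonneg x]
  have h := Real.abs_log_sub_add_sum_range_le h1 1
  simp only [Finset.sum_range_one, pow_one, Nat.cast_zero, zero_add, div_one, pow_succ,
    pow_zero, one_mul] at h
  rw [show (1 : ℝ) - (-x) = 1 + x by ring] at h
  rw [show (-x : ℝ) + Real.log (1+x) = Real.log (1+x) - x by ring] at h
  refine h.trans ?_
  rw [abs_neg]
  have h4 : (0:ℝ) < 1 - |x| := by linarith [abs_nonneg x]
  rw [div_le_iff₀ h4]
  nlinarith [abs_nonneg x, sq_nonneg x, _root_.sq_abs x]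

lemma aux_sin_lb {x : ℝ} (h0 : 0 < x) (h1 : x ≤ 1) : x/2 ≤ Real.sin x := by
  have h := Real.sin_gt_sub_cube h0
  have h2 : x^3 ≤ x := by
    nlinarith [mul_nonneg (mul_nonneg h0.le (sub_nonneg.2 h1)) (by linarith : (0:ℝ) ≤ 1 + x)]
  linarith

lemma aux_re_bound {ε a ρ t s0 : ℝ}
    (hε0 : 0 < ε) (ha : a = 1/ε)
    (hs0 : 0 < s0) (hs1 : s0 ≤ 1/20) (hεs0 : ε ≤ s0)
    (ht : |t| ≤ s0) (hρ : |ρ - a| ≤ a * Real.sin s0) :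
    |(a - ρ * Real.cos t) - (Real.log ρ - Real.log a) / Real.log (1-ε)| ≤ 10 * (a * s0^2) := by
  have ha0 : 0 < a := by rw [ha]; positivity
  have haε : a * ε = 1 := by rw [ha]; field_simp
  have hε2 : ε ≤ 1/20 := hεs0.trans hs1
  have hsin_le : Real.sin s0 ≤ s0 := (Real.sin_lt hs0).le
  have hρa : |ρ - a| ≤ a * s0 := hρ.trans (by nlinarith)
  obtain ⟨hρ1, hρ2⟩ := abs_le.mp hρa
  have hρpos : 0 < ρ := by nlinarith
  set δ : ℝ := ρ/a - 1 with hδdef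
  have hδeq : δ = (ρ - a)/a := by rw [hδdef]; field_simp
  have hδ : |δ| ≤ s0 := by
    rw [hδeq, abs_div, _root_.abs_of_pos ha0, div_le_iff₀ ha0]
    calc |ρ - a| ≤ a * s0 := hρa
    _ = s0 * a := by ring
  have hδ2 : |δ| ≤ 1/2 := hδ.trans (by linarith)
  obtain ⟨hδl, hδu⟩ := abs_le.mp hδ
  have h1δ : 0 < 1 + δ := by linarith
  have haρ : a - ρ = -(a*δ) := by rw [hδeq]; field_simp; ring
  have hlog : Real.log ρ - Real.log a = Real.log (1+δ) := by
    rw [← Real.log_div hρpos.ne' ha0.ne']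
    congr 1
    rw [hδeq]; field_simp; ring
  set L : ℝ := Real.log (1-ε) with hLdef
  have hL_le : L ≤ -ε := by
    have := Real.log_le_sub_one_of_pos (show (0:ℝ) < 1-ε by linarith)
    rw [hLdef]; linarith
  have hLneg : L < 0 := by linarith
  have T1 : |L + ε| ≤ 2*ε^2 := by
    have h := aux_log_taylor (x := -ε) (by rw [abs_neg, _root_.abs_of_pos hε0]; linarith)
    rw [show (1:ℝ) + -ε = 1 - ε by ring, sub_neg_eq_add] at h
    calc |L + ε| = |Real.log (1-ε) + ε| := by rw [hLdef]
    _ ≤ 2*(-ε)^2 := h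
    _ = 2*ε^2 := by ring
  have T2 : |Real.log (1+δ) - δ| ≤ 2*δ^2 := aux_log_taylor hδ2
  have hδsq : δ^2 ≤ s0^2 := by nlinarith
  -- piece 3
  have hN : a*δ*L + Real.log (1+δ) = a*δ*(L+ε) + (Real.log (1+δ) - δ) := by
    linear_combination (-δ) * haε
  have hNum : |a*δ*L + Real.log (1+δ)| ≤ a*s0*(2*ε^2) + 2*s0^2 := by
    rw [hN]
    calc |a*δ*(L+ε) + (Real.log (1+δ) - δ)| ≤ |a*δ*(L+ε)| + |Real.log (1+δ) - δ| :=
          abs_add_le _ _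
    _ ≤ a*s0*(2*ε^2) + 2*s0^2 := by
        rw [abs_mul, abs_mul, _root_.abs_of_pos ha0]
        have h1 : a * |δ| * |L + ε| ≤ a * s0 * (2*ε^2) := by
          apply mul_le_mul (by nlinarith) T1 (abs_nonneg _) (by positivity)
        nlinarith
  have P3 : |(a - ρ) - Real.log (1+δ)/L| ≤ 4*(a*s0^2) := by
    have heq : (a - ρ) - Real.log (1+δ)/L = -((a*δ*L + Real.log (1+δ))/L) := by
      have hLne : L ≠ 0 := hLneg.ne
      have hdiv : (a*δ*L + Real.log (1+δ))/L = a*δ + Real.log (1+δ)/L := by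
        rw [add_div, mul_div_assoc, div_self hLne, mul_one]
      rw [haρ, hdiv]; ring
    rw [heq, abs_neg, abs_div]
    have hLabs : ε ≤ |L| := by rw [_root_.abs_of_neg hLneg]; linarith
    have hstep : |a*δ*L + Real.log (1+δ)| / |L| ≤ (a*s0*(2*ε^2) + 2*s0^2)/ε :=
      div_le_div₀ (by positivity) hNum hε0 hLabs
    refine hstep.trans ?_
    rw [div_le_iff₀ hε0]
    have h2 : a*s0*(2*ε^2) = 2*s0*ε := by linear_combination 2*s0*ε*haε
    have h3 : 4*(a*s0^2)*ε = 4*s0^2 := by linear_combination 4*s0^2*haε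
    nlinarith [mul_le_mul_of_nonneg_left hεs0 hs0.le]
  -- pieces 1, 2
  have hcos : 1 - t^2/2 ≤ Real.cos t := Real.one_sub_sq_div_two_le_cos
  have hcos1 : Real.cos t ≤ 1 := Real.cos_le_one t
  obtain ⟨htl, htu⟩ := abs_le.mp ht
  have ht2 : t^2 ≤ s0^2 := by nlinarith
  have P1 : |a * (1 - Real.cos t)| ≤ a*s0^2/2 := by
    rw [_root_.abs_of_nonneg (by nlinarith)]
    nlinarith
  have P2 : |(a - ρ)*(Real.cos t - 1)| ≤ a*s0^2/2 := by
    rw [abs_mul]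
    have hc2 : |Real.cos t - 1| ≤ s0^2/2 := by
      rw [abs_of_nonpos (by linarith)]; linarith
    calc |a - ρ| * |Real.cos t - 1| ≤ (a*s0) * (s0^2/2) := by
          apply mul_le_mul _ hc2 (abs_nonneg _) (by positivity)
          rw [abs_sub_comm]; exact hρa
    _ ≤ a*s0^2/2 := by
        nlinarith [mul_nonneg (mul_nonneg ha0.le (sq_nonneg s0)) (show (0:ℝ) ≤ 1 - s0 by linarith)]
  have hsplit : (a - ρ*Real.cos t) - (Real.log ρ - Real.log a)/L =
      a*(1 - Real.cos t) + (a-ρ)*(Real.cos t - 1) + ((a - ρ) - Real.log (1+δ)/L) := by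
    rw [hlog]; ring
  rw [hsplit]
  calc |a*(1 - Real.cos t) + (a-ρ)*(Real.cos t - 1) + ((a - ρ) - Real.log (1+δ)/L)|
      ≤ |a*(1 - Real.cos t)| + |(a-ρ)*(Real.cos t - 1)| + |(a - ρ) - Real.log (1+δ)/L| :=
        abs_add_three _ _ _
  _ ≤ 10 * (a*s0^2) := by
      have hpos : (0:ℝ) ≤ a*s0^2 := by positivity
      linarith

lemma aux_im_bound {ε a ρ t s0 : ℝ}
    (hε0 : 0 < ε) (ha : a = 1/ε)
    (hs0 : 0 < s0) (hs1 : s0 ≤ 1/20)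
    (ht : |t| ≤ s0) (hρ : |ρ - a| ≤ a * Real.sin s0) :
    |ρ * Real.sin t - 2*a*Real.tan (t/2)| ≤ 10 * (a * s0^2) := by
  have ha0 : 0 < a := by rw [ha]; positivity
  have hsin_le : Real.sin s0 ≤ s0 := (Real.sin_lt hs0).le
  have hρa : |ρ - a| ≤ a * s0 := hρ.trans (by nlinarith)
  obtain ⟨hρ1, hρ2⟩ := abs_le.mp hρa
  set c : ℝ := Real.cos (t/2) with hcdef
  set s : ℝ := Real.sin (t/2) with hsdef
  obtain ⟨htl, htu⟩ := abs_le.mp ht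
  have ht2q : (t/2)^2 ≤ s0^2/4 := by nlinarith
  have hc : 1/2 ≤ c := by
    have h := Real.one_sub_sq_div_two_le_cos (x := t/2)
    rw [hcdef]; nlinarith
  have hcpos : 0 < c := by linarith
  have hs : |s| ≤ s0/2 := by
    rw [hsdef]
    calc |Real.sin (t/2)| ≤ |t/2| := Real.abs_sin_le_abs
    _ ≤ s0/2 := by
        have h : |t/2| = |t|/2 := by rw [abs_div]; norm_num
        rw [h]; linarith [abs_le.mpr ⟨htl, htu⟩]
  have hsc : s^2 + c^2 = 1 := Real.sin_sq_add_cos_sq (t/2)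
  have hsin_t : Real.sin t = 2*s*c := by
    rw [hsdef, hcdef, ← Real.sin_two_mul]
    congr 1; ring
  have htan : Real.tan (t/2) = s/c := Real.tan_eq_sin_div_cos _
  have hexpr : ρ*Real.sin t - 2*a*Real.tan (t/2) = (2*s/c)*(ρ*c^2 - a) := by
    rw [hsin_t, htan]; field_simp
  have hbound : |ρ*c^2 - a| ≤ 2*(a*s0) := by
    have h1 : ρ*c^2 - a = (ρ-a)*c^2 - a*s^2 := by linear_combination a * hsc
    rw [h1, sub_eq_add_neg]
    calc |(ρ-a)*c^2 + -(a*s^2)| ≤ |(ρ-a)*c^2| + |-(a*s^2)| := abs_add_le _ _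
    _ ≤ 2*(a*s0) := by
        rw [abs_neg, abs_mul, abs_mul, _root_.abs_of_pos ha0,
          _root_.abs_of_nonneg (sq_nonneg c), _root_.abs_of_nonneg (sq_nonneg s)]
        have hc1 : c^2 ≤ 1 := by nlinarith [sq_nonneg s]
        have hs2 : s^2 ≤ s0^2/4 := by nlinarith [_root_.sq_abs s, abs_nonneg s]
        nlinarith
  rw [hexpr, abs_mul]
  have h2s : |2*s/c| ≤ 2*s0 := by
    rw [abs_div, _root_.abs_of_pos hcpos, div_le_iff₀ hcpos, abs_mul]
    rw [show |(2:ℝ)| = 2 by norm_num]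
    nlinarith
  calc |2*s/c| * |ρ*c^2 - a| ≤ (2*s0) * (2*(a*s0)) := by
        apply mul_le_mul h2s hbound (abs_nonneg _) (by positivity)
  _ ≤ 10*(a*s0^2) := by nlinarith

/-- Estimate for `H_ε` on the regions `Q_ε` (Section 5): for fixed `1/2 < γ < 1`,
(i) every bounded set is contained in `Q_ε` for all small `ε > 0`, and
(ii) `|Re W − Re H_ε(W)| = O(ε^{2γ−1})` and `|Im W − Im H_ε(W)| = O(ε^{2γ−1})`
uniformly on `Q_ε`. -/
theorem H_estimate_on_Q
    (γ : ℝ) (hγ1 : 1 / 2 < γ) (hγ2 : γ < 1)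
    (H : ℝ → ℂ → ℂ)
    (hH : ∀ ε ∈ Ioo (0:ℝ) 1, ∀ ρ t : ℝ, 0 < ρ → 0 < t → t < 2 * Real.pi →
      H ε (((1 / ε : ℝ) : ℂ) + (ρ : ℂ) * Complex.exp ((t : ℂ) * Complex.I)) =
        (((Real.log ρ - Real.log (1 / ε)) / Real.log (1 - ε) : ℝ) : ℂ) +
        ((2 * (1 / ε) * Real.tan ((Real.pi - t) / 2) : ℝ) : ℂ) * Complex.I) :
    (∀ D : Set ℂ, Bornology.IsBounded D →
      ∃ ε₀ : ℝ, 0 < ε₀ ∧ ε₀ ≤ 1 ∧ ∀ ε : ℝ, 0 < ε → ε < ε₀ → D ⊆ Qregion γ ε) ∧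
    (∃ C : ℝ, 0 < C ∧ ∃ ε₁ : ℝ, 0 < ε₁ ∧ ε₁ ≤ 1 ∧
      ∀ ε : ℝ, 0 < ε → ε < ε₁ → ∀ W ∈ Qregion γ ε,
        |W.re - (H ε W).re| ≤ C * ε ^ (2 * γ - 1) ∧
        |W.im - (H ε W).im| ≤ C * ε ^ (2 * γ - 1)) := by
  have hγ0 : (0:ℝ) < γ := by linarith
  have h1γ : (0:ℝ) < 1 - γ := by linarith
  have hπ : (3:ℝ) < Real.pi := Real.pi_gt_three
  constructor
  · -- part (i)
    intro D hD
    obtain ⟨M0, hM0⟩ := hD.subset_closedBall 0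
    set M : ℝ := max M0 1 with hMdef
    have hM1 : (1:ℝ) ≤ M := le_max_right _ _
    have hDM : D ⊆ closedBall 0 M := hM0.trans (closedBall_subset_closedBall (le_max_left _ _))
    set b : ℝ := (8*M)⁻¹ with hbdef
    have hb0 : 0 < b := by positivity
    refine ⟨min (b ^ ((1-γ)⁻¹)) (1/2), lt_min (Real.rpow_pos_of_pos hb0 _) (by norm_num),
      (min_le_right _ _).trans (by norm_num), ?_⟩
    intro ε hε0 hεlt W hWD
    have hε2 : ε < 1/2 := lt_of_lt_of_le hεlt (min_le_right _ _)
    have hεb : ε ^ (1-γ) ≤ b := by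
      have h1 : ε ^ (1-γ) ≤ (b ^ ((1-γ)⁻¹)) ^ (1-γ) :=
        Real.rpow_le_rpow hε0.le (le_of_lt (lt_of_lt_of_le hεlt (min_le_left _ _))) h1γ.le
      rwa [Real.rpow_inv_rpow hb0.le h1γ.ne'] at h1
    set s0 : ℝ := ε ^ γ with hs0def
    have hs0pos : 0 < s0 := Real.rpow_pos_of_pos hε0 _
    have hs0lt1 : s0 < 1 := Real.rpow_lt_one hε0.le (by linarith) hγ0
    have hεsplit : ε = ε ^ (1-γ) * s0 := by
      rw [hs0def, ← Real.rpow_add hε0, show (1-γ) + γ = 1 by ring, Real.rpow_one]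
    have hMne : (8:ℝ)*M ≠ 0 := by positivity
    have hMε : M * ε ≤ s0/8 := by
      calc M * ε = M * (ε^(1-γ) * s0) := by rw [← hεsplit]
      _ ≤ M * (b * s0) := by
          apply mul_le_mul_of_nonneg_left (mul_le_mul_of_nonneg_right hεb hs0pos.le)
            (by linarith)
      _ = s0/8 := by rw [hbdef]; field_simp
    set a : ℝ := 1/ε with hadef
    have ha0 : 0 < a := by rw [hadef]; positivity
    have haε : a * ε = 1 := by rw [hadef]; field_simp
    have hsin : s0/2 ≤ Real.sin s0 := aux_sin_lb hs0pos hs0lt1.le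
    have hM_le : M ≤ a*s0/8 := by
      have h1 := mul_le_mul_of_nonneg_right hMε ha0.le
      have h2 : M * ε * a = M := by
        rw [mul_assoc, mul_comm ε a, haε, mul_one]
      nlinarith
    have hMa8 : M ≤ a/8 := by nlinarith
    have hWM : ‖W‖ ≤ M := by
      have h := hDM hWD
      rwa [mem_closedBall, Complex.dist_eq, sub_zero] at h
    set z : ℂ := W - (a:ℂ) with hzdef
    have hz_re : z.re = W.re - a := by simp [hzdef]
    have hz_im : z.im = W.im := by simp [hzdef]
    set ρ : ℝ := ‖z‖ with hρdef
    have hρdiff : |ρ - a| ≤ M := by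
      have h1 := abs_norm_sub_norm_le z (((- a : ℝ)):ℂ)
      have h2 : z - ((-a : ℝ):ℂ) = W := by rw [hzdef]; push_cast; ring
      have h3 : ‖(((-a : ℝ)):ℂ)‖ = a := by
        rw [Complex.norm_real, Real.norm_eq_abs, abs_neg, _root_.abs_of_pos ha0]
      rw [h2, h3, ← hρdef] at h1
      exact h1.trans hWM
    have hρ_lb : a - M ≤ ρ := by
      have := abs_le.mp hρdiff
      linarith [this.1]
    have hρ_pos : 0 < ρ := by linarith
    have cond2 : |ρ - a| ≤ a * Real.sin s0 := by nlinarith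
    set x : ℝ := z.im / ρ with hxdef
    have hzim : |z.im| ≤ M := by
      rw [hz_im]; exact (Complex.abs_im_le_norm W).trans hWM
    have hzim_ρ : |z.im| ≤ ρ := by rw [hρdef]; exact Complex.abs_im_le_norm z
    have hx1 : |x| ≤ 1 := by
      rw [hxdef, abs_div, _root_.abs_of_pos hρ_pos, div_le_one hρ_pos]; exact hzim_ρ
    have hx_sin : |x| ≤ Real.sin s0 := by
      rw [hxdef, abs_div, _root_.abs_of_pos hρ_pos, div_le_iff₀ hρ_pos]
      have h1 : s0/2 * (a - M) ≤ Real.sin s0 * ρ := by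
        apply mul_le_mul hsin hρ_lb (by linarith) (by linarith)
      nlinarith
    set t : ℝ := Real.arcsin x with htdef
    have hs0pi : s0 ≤ Real.pi/2 := by linarith
    have ht_abs : |t| ≤ s0 := by
      obtain ⟨hxl, hxu⟩ := abs_le.mp hx_sin
      rw [htdef, abs_le]
      constructor
      · have h1 : Real.arcsin (-(Real.sin s0)) ≤ Real.arcsin x := Real.monotone_arcsin hxl
        rwa [← Real.sin_neg, Real.arcsin_sin (by linarith) (by linarith)] at h1
      · have h1 : Real.arcsin x ≤ Real.arcsin (Real.sin s0) := Real.monotone_arcsin hxu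
        rwa [Real.arcsin_sin (by linarith) (by linarith)] at h1
    obtain ⟨hx1l, hx1u⟩ := abs_le.mp hx1
    have hsin_t : Real.sin t = x := Real.sin_arcsin hx1l hx1u
    have hzre_neg : z.re < 0 := by
      have h1 : |W.re| ≤ M := (Complex.abs_re_le_norm W).trans hWM
      obtain ⟨h2, h3⟩ := abs_le.mp h1
      rw [hz_re]
      nlinarith
    have hcos_t : Real.cos t = -z.re / ρ := by
      rw [htdef, Real.cos_arcsin]
      have habs2 : ρ^2 = z.re^2 + z.im^2 := by
        rw [hρdef, Complex.sq_norm, Complex.normSq_apply]; ring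
      have hx2 : 1 - x^2 = (z.re/ρ)^2 := by
        rw [hxdef]; field_simp; nlinarith
      rw [hx2, Real.sqrt_sq_eq_abs, abs_div, _root_.abs_of_pos hρ_pos, _root_.abs_of_neg hzre_neg]
    have hz_eq : (ρ:ℂ) * Complex.exp (((Real.pi - t :ℝ):ℂ) * Complex.I) = z := by
      apply Complex.ext
      · simp only [Complex.mul_re, Complex.ofReal_re, Complex.ofReal_im,
          Complex.exp_ofReal_mul_I_re, Complex.exp_ofReal_mul_I_im, Real.cos_pi_sub,
          zero_mul, sub_zero]
        rw [hcos_t]; field_simp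
      · simp only [Complex.mul_im, Complex.ofReal_re, Complex.ofReal_im,
          Complex.exp_ofReal_mul_I_re, Complex.exp_ofReal_mul_I_im, Real.sin_pi_sub,
          zero_mul, add_zero]
        rw [hsin_t, hxdef]; field_simp
    refine ⟨ρ, t, ?_, ?_, ?_⟩
    · rw [← hs0def]; exact ht_abs
    · rw [← hs0def, ← hadef]; exact cond2
    · rw [← hadef, hz_eq, hzdef]; ring
  · -- part (ii)
    refine ⟨10, by norm_num, 1/400, by norm_num, by norm_num, ?_⟩
    intro ε hε0 hε1 W hW
    obtain ⟨ρ, t, ht, hρ, hWeq⟩ := hW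
    have hεlt1 : ε < 1 := by linarith
    have hs0pos : 0 < ε^γ := Real.rpow_pos_of_pos hε0 _
    have hs0le : ε^γ ≤ 1/20 := by
      have h1 : ε^γ ≤ ε^((1:ℝ)/2) := Real.rpow_le_rpow_of_exponent_ge hε0 hεlt1.le hγ1.le
      have h2 : ε^((1:ℝ)/2) ≤ (1/400:ℝ)^((1:ℝ)/2) :=
        Real.rpow_le_rpow hε0.le (by linarith) (by norm_num)
      have h3 : ((1:ℝ)/400)^((1:ℝ)/2) = 1/20 := by
        rw [show (1/400:ℝ) = (1/20)^(2:ℕ) by norm_num, ← Real.rpow_natCast (1/20:ℝ) 2,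
          ← Real.rpow_mul (by norm_num)]
        norm_num
      linarith
    have hεs0 : ε ≤ ε^γ := by
      calc ε = ε^(1:ℝ) := (Real.rpow_one ε).symm
      _ ≤ ε^γ := Real.rpow_le_rpow_of_exponent_ge hε0 hεlt1.le hγ2.le
    obtain ⟨htl, htu⟩ := abs_le.mp ht
    have hsins0 : Real.sin (ε^γ) ≤ ε^γ := (Real.sin_lt hs0pos).le
    have hρpos : 0 < ρ := by
      have h1 := (abs_le.mp hρ).1
      have h2 : (1/ε) * Real.sin (ε^γ) ≤ (1/ε) * (ε^γ) := by
        apply mul_le_mul_of_nonneg_left hsins0 (by positivity)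
      have h3 : (0:ℝ) < 1/ε := by positivity
      nlinarith
    have hH' := hH ε ⟨hε0, by linarith⟩ ρ (Real.pi - t) hρpos (by linarith) (by linarith)
    rw [show (Real.pi - (Real.pi - t))/2 = t/2 by ring] at hH'
    rw [hWeq, hH']
    have hre : (((1/ε:ℝ):ℂ) + (ρ:ℂ) * Complex.exp (((Real.pi - t :ℝ):ℂ) * Complex.I)).re
        = 1/ε - ρ * Real.cos t := by
      simp only [Complex.add_re, Complex.ofReal_re, Complex.mul_re, Complex.ofReal_im,
        Complex.exp_ofReal_mul_I_re, Complex.exp_ofReal_mul_I_im, Real.cos_pi_sub,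
        zero_mul, sub_zero]
      ring
    have him : (((1/ε:ℝ):ℂ) + (ρ:ℂ) * Complex.exp (((Real.pi - t :ℝ):ℂ) * Complex.I)).im
        = ρ * Real.sin t := by
      simp only [Complex.add_im, Complex.ofReal_im, Complex.mul_im, Complex.ofReal_re,
        Complex.exp_ofReal_mul_I_re, Complex.exp_ofReal_mul_I_im, Real.sin_pi_sub,
        zero_mul, add_zero, zero_add]
    have hre2 : ((((Real.log ρ - Real.log (1/ε)) / Real.log (1-ε) : ℝ):ℂ) +
        ((2 * (1/ε) * Real.tan (t/2) : ℝ):ℂ) * Complex.I).re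
        = (Real.log ρ - Real.log (1/ε)) / Real.log (1-ε) := by
      simp only [Complex.add_re, Complex.ofReal_re, Complex.mul_re, Complex.I_re,
        Complex.I_im, Complex.ofReal_im, mul_zero, mul_one, zero_mul, sub_zero, add_zero]
    have him2 : ((((Real.log ρ - Real.log (1/ε)) / Real.log (1-ε) : ℝ):ℂ) +
        ((2 * (1/ε) * Real.tan (t/2) : ℝ):ℂ) * Complex.I).im
        = 2 * (1/ε) * Real.tan (t/2) := by
      simp only [Complex.add_im, Complex.ofReal_im, Complex.mul_im, Complex.I_re,
        Complex.I_im, Complex.ofReal_re, mul_zero, mul_one, zero_mul, add_zero, zero_add]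
    have hpow : ε^(2*γ-1) = (1/ε) * (ε^γ)^2 := by
      rw [show 2*γ-1 = γ + (γ + (-1)) by ring, Real.rpow_add hε0, Real.rpow_add hε0,
        Real.rpow_neg_one]
      ring
    constructor
    · rw [hre, hre2, hpow]
      exact aux_re_bound hε0 rfl hs0pos hs0le hεs0 ht hρ
    · rw [him, him2, hpow]
      have h := aux_im_bound hε0 rfl hs0pos hs0le ht hρ
      calc |ρ * Real.sin t - 2 * (1/ε) * Real.tan (t/2)|
          = |ρ * Real.sin t - 2 * (1/ε) * Real.tan (t/2)| := rfl
      _ ≤ 10 * ((1/ε) * (ε^γ)^2) := h
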